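/- Consider states x_i(t) ∈ ℝ for each load bus i ∈ L and y_i(t) ∈ ℝ for every bus i ∈ {1,…,N}, evolving according to: for i ∈ L, τ·ẋ_i = Q_i(1 − x_i) − P_i y_i − Σ_{j∈L} d_{ij} x_j + Σ_{j=1}^N D_{ij} y_j and τ·ẏ_i = Q_i y_i − P_i x_i − Σ_{j∈L} D_{ij} x_j − Σ_{j=1}^N d_{ij} y_j; and for i ∈ 𝒢, τ·ẏ_i = Q_i y_i − Σ_{j∈L} D_{ij} x_j − Σ_{j=1}^N d_{ij} y_j. This system is affine in (x,y): write it as τ·(ẋ,ẏ) = −M(x,y) + c for the corresponding real (n+N)×(n+N) matrix M and vector c. Assume: (i) every complex eigenvalue of M is either 0 or has strictly positive real part; (ii) 0 is an eigenvalue of M of algebraic multiplicity one whose eigenspace is spanned by the vector (0_n, 1_N) (zeros in the n x-coordinates, ones in the N y-coordinates); (iii) there exists (x*, y*) ∈ ℝ^n × ℝ^N with M(x*, y*) = c. Then x* is the same for every solution (x*,y*) of M(x*,y*) = c, and for every initial condition (x(0), y(0)) ∈ ℝ^n × ℝ^N, every solution of the ODE system satisfies lim_{t→∞} x_i(t) =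 x*_i for each i ∈ L. -/

import Mathlib

open Filter Topology

open NormedSpace

section ExpAux

variable {𝕂 : Type*} [RCLike 𝕂] {E : Type*} [NormedAddCommGroup E] [NormedSpace 𝕂 E]
  [CompleteSpace E]

lemma expAux_apply_eq_tsum (A : E →L[𝕂] E) (v : E) :
    exp A v = ∑' k : ℕ, ((k.factorial : 𝕂))⁻¹ • (A ^ k) v := by
  have hs : Summable fun k : ℕ => ((k.factorial : 𝕂))⁻¹ • A ^ k := expSeries_summable' A
  have h := (ContinuousLinearMap.apply 𝕂 E v).map_tsum hs
  simp only [exp_eq_tsum 𝕂]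
  simpa using h

lemma expAux_summable_apply (A : E →L[𝕂] E) (v : E) :
    Summable fun k : ℕ => ((k.factorial : 𝕂))⁻¹ • (A ^ k) v := by
  have hs : Summable fun k : ℕ => ((k.factorial : 𝕂))⁻¹ • A ^ k := expSeries_summable' A
  have := hs.map ((ContinuousLinearMap.apply 𝕂 E v).toLinearMap.toAddMonoidHom)
    (ContinuousLinearMap.apply 𝕂 E v).continuous
  simpa [Function.comp_def] using this

lemma expAux_apply_of_pow_apply_eq_zero (A : E →L[𝕂] E) (v : E) (K : ℕ) (h : (A ^ K) v = 0) :
    exp A v = ∑ k ∈ Finset.range K, ((k.factorial : 𝕂))⁻¹ • (A ^ k) v := by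
  rw [expAux_apply_eq_tsum]
  apply tsum_eq_sum
  intro k hk
  have hKk : K ≤ k := le_of_not_gt (by simpa using hk)
  have : (A ^ k) v = 0 := by
    rw [← Nat.sub_add_cancel hKk, pow_add, ContinuousLinearMap.mul_apply, h, map_zero]
  rw [this, smul_zero]

lemma expAux_apply_of_apply_eq_zero (A : E →L[𝕂] E) (v : E) (h : A v = 0) :
    exp A v = v := by
  rw [expAux_apply_of_pow_apply_eq_zero A v 1 (by simpa using h)]
  simp

lemma expAux_smul_one_apply (c : 𝕂) (v : E) :
    exp (c • (1 : E →L[𝕂] E)) v = exp c • v := by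
  rw [expAux_apply_eq_tsum]
  have h : ∀ k : ℕ, ((k.factorial : 𝕂))⁻¹ • ((c • (1 : E →L[𝕂] E)) ^ k) v
      = (((k.factorial : 𝕂))⁻¹ * c ^ k) • v := by
    intro k
    rw [smul_pow, one_pow]
    simp [smul_smul]
  simp_rw [h]
  rw [Summable.tsum_smul_const]
  · congr 1
    rw [exp_eq_tsum 𝕂]
    simp_rw [smul_eq_mul]
  · have := expSeries_summable' (𝕂 := 𝕂) (𝔸 := 𝕂) c
    simpa [smul_eq_mul] using this

lemma expAux_clm_pow_apply_eq {R : Type*} [RCLike R] {F : Type*} [NormedAddCommGroup F]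
    [NormedSpace R F] (A : F →L[R] F) (μ : R) (K : ℕ) (w : F) :
    ((A - μ • (1 : F →L[R] F)) ^ K) w = ((((A : F →ₗ[R] F) - μ • 1) ^ K) w) := by
  induction K generalizing w with
  | zero => simp
  | succ k ih =>
    rw [pow_succ, pow_succ, ContinuousLinearMap.mul_apply, Module.End.mul_apply, ih]
    simp

end ExpAux

section Core

variable {E : Type*} [NormedAddCommGroup E] [NormedSpace ℂ E] [FiniteDimensional ℂ E]

/-- Core spectral convergence: if every eigenvalue of `A` is `0` or has positive real part and
the generalized eigenspace at `0` is contained in the span of `v0 ∈ ker A`, then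
`exp(-s A) w` converges to a multiple of `v0`. -/
lemma core_tendsto (A : E →L[ℂ] E) (v0 : E)
    (hroots : ∀ μ : ℂ, (LinearMap.charpoly (A : E →ₗ[ℂ] E)).IsRoot μ → μ = 0 ∨ 0 < μ.re)
    (hker0 : Module.End.maxGenEigenspace (A : E →ₗ[ℂ] E) 0 ≤ Submodule.span ℂ {v0})
    (hv0 : A v0 = 0) (w : E) :
    ∃ γ : ℂ, Tendsto (fun s : ℝ => exp ((-(s : ℂ)) • A) w) atTop (𝓝 (γ • v0)) := by
  letI : NormedAlgebra ℚ (E →L[ℂ] E) := NormedAlgebra.restrictScalars ℚ ℂ (E →L[ℂ] E)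
  set f : Module.End ℂ E := (A : E →ₗ[ℂ] E) with hf
  let good : Submodule ℂ E :=
  { carrier := {u | ∃ γ : ℂ, Tendsto (fun s : ℝ => exp ((-(s : ℂ)) • A) u) atTop (𝓝 (γ • v0))}
    add_mem' := by
      rintro a b ⟨γa, ha⟩ ⟨γb, hb⟩
      exact ⟨γa + γb, by simpa [map_add, add_smul] using ha.add hb⟩
    zero_mem' := ⟨0, by simpa using tendsto_const_nhds⟩
    smul_mem' := by
      rintro c a ⟨γ, h⟩
      exact ⟨c * γ, by simpa [map_smul, smul_smul] using h.const_smul c⟩ }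
  suffices hle : (⊤ : Submodule ℂ E) ≤ good by exact hle Submodule.mem_top
  rw [← Module.End.iSup_maxGenEigenspace_eq_top f]
  apply iSup_le
  intro μ
  by_cases hbot : f.maxGenEigenspace μ = ⊥
  · rw [hbot]; exact bot_le
  · have hroot : μ = 0 ∨ 0 < μ.re := by
      apply hroots
      have hUE : f.HasUnifEigenvalue μ ⊤ := hbot
      have hE : f.HasUnifEigenvalue μ 1 := hUE.lt zero_lt_one
      have hmin : (minpoly ℂ f).IsRoot μ := Module.End.hasEigenvalue_iff_isRoot.mp hE
      exact hmin.dvd (LinearMap.minpoly_dvd_charpoly f)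
    rcases hroot with h0 | hpos
    · subst h0
      refine le_trans hker0 ?_
      rw [Submodule.span_le, Set.singleton_subset_iff]
      refine ⟨1, ?_⟩
      have hconst : ∀ s : ℝ, exp ((-(s : ℂ)) • A) v0 = v0 := by
        intro s
        apply expAux_apply_of_apply_eq_zero
        rw [ContinuousLinearMap.smul_apply, hv0, smul_zero]
      simp only [hconst, one_smul]
      exact tendsto_const_nhds
    · -- Re μ > 0 case
      intro u hu
      rw [Module.End.mem_maxGenEigenspace] at hu
      obtain ⟨K, hK⟩ := hu
      set N : E →L[ℂ] E := A - μ • 1 with hN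
      have hNK : (N ^ K) u = 0 := by
        rw [hN, expAux_clm_pow_apply_eq]; exact hK
      refine ⟨0, ?_⟩
      have hrep : ∀ s : ℝ, exp ((-(s : ℂ)) • A) u =
          ∑ k ∈ Finset.range K,
            (Complex.exp ((-(s : ℂ)) * μ) * (((k.factorial : ℂ))⁻¹ * (-(s : ℂ)) ^ k)) •
              ((N ^ k) u) := by
        intro s
        have hsplit : (-(s : ℂ)) • A = ((-(s : ℂ)) * μ) • (1 : E →L[ℂ] E) + (-(s : ℂ)) • N := by
          rw [hN]; module
        have hcomm : Commute (((-(s : ℂ)) * μ) • (1 : E →L[ℂ] E)) ((-(s : ℂ)) • N) :=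
          ((Commute.one_left N).smul_left _).smul_right _
        rw [hsplit, exp_add_of_commute hcomm, ContinuousLinearMap.mul_apply]
        have hpow : (((-(s : ℂ)) • N) ^ K) u = 0 := by
          rw [smul_pow, ContinuousLinearMap.smul_apply, hNK, smul_zero]
        rw [expAux_apply_of_pow_apply_eq_zero _ _ K hpow, map_sum]
        refine Finset.sum_congr rfl fun k _ => ?_
        rw [map_smul, smul_pow, ContinuousLinearMap.smul_apply,
          expAux_smul_one_apply, ← Complex.exp_eq_exp_ℂ, smul_smul, smul_smul]
        exact congrArg (fun z : ℂ => z • ((N ^ k) u)) (by ring)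
      rw [show ((0 : ℂ) • v0) = (0 : E) by rw [zero_smul]]
      simp only [hrep]
      rw [show (0 : E) = ∑ _k ∈ Finset.range K, (0 : E) by simp]
      apply tendsto_finset_sum
      intro k _
      have hck : Tendsto (fun s : ℝ =>
          Complex.exp ((-(s : ℂ)) * μ) * (((k.factorial : ℂ))⁻¹ * (-(s : ℂ)) ^ k))
          atTop (𝓝 0) := by
        have h1 : Tendsto (fun s : ℝ => μ.re * s) atTop atTop :=
          Tendsto.const_mul_atTop hpos tendsto_id
        have h2 := (Real.tendsto_pow_mul_exp_neg_atTop_nhds_zero k).comp h1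
        have hb : Tendsto (fun s : ℝ => ((k.factorial : ℝ))⁻¹ * ((μ.re ^ k)⁻¹ *
            ((μ.re * s) ^ k * Real.exp (-(μ.re * s))))) atTop (𝓝 0) := by
          have := (h2.const_mul ((μ.re ^ k)⁻¹)).const_mul ((k.factorial : ℝ))⁻¹
          simpa [Function.comp] using this
        apply squeeze_zero_norm' ?_ hb
        filter_upwards [eventually_ge_atTop (0 : ℝ)] with s hs
        have hnorm : ‖Complex.exp ((-(s : ℂ)) * μ) * (((k.factorial : ℂ))⁻¹ * (-(s : ℂ)) ^ k)‖
            = Real.exp (-(μ.re * s)) * (((k.factorial : ℝ))⁻¹ * s ^ k) := by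
          rw [norm_mul, norm_mul, norm_pow, Complex.norm_exp]
          congr 2
          · congr 1
            simp [Complex.mul_re]
            ring
          · simp
          · rw [← Complex.ofReal_neg, Complex.norm_real, Real.norm_eq_abs, abs_neg,
              abs_of_nonneg hs]
        rw [hnorm]
        apply le_of_eq
        have hμ : μ.re ≠ 0 := ne_of_gt hpos
        rw [mul_pow]
        field_simp
      have := hck.smul_const ((N ^ k) u)
      simpa using this

end Core

section ODE

variable {E : Type*} [NormedAddCommGroup E] [NormedSpace ℝ E] [CompleteSpace E]

lemma ode_representation (B0 : E →L[ℝ] E) (Z Z' : ℝ → E)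
    (hZ : ∀ t, 0 ≤ t → HasDerivWithinAt Z (Z' t) (Set.Ici 0) t)
    (hZ' : ∀ t, 0 ≤ t → Z' t = -(B0 (Z t))) :
    ∀ t, 0 ≤ t → Z t = exp (t • (-B0)) (Z 0) := by
  letI : NormedAlgebra ℚ (E →L[ℝ] E) := NormedAlgebra.restrictScalars ℚ ℝ (E →L[ℝ] E)
  have key : ∀ t, 0 ≤ t → exp (t • B0) (Z t) = Z 0 := by
    intro t ht
    set g : ℝ → E := fun r => exp (r • B0) (Z r) with hg
    have hcontZ : ContinuousOn Z (Set.Icc 0 t) := by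
      intro s hs
      exact ((hZ s hs.1).continuousWithinAt).mono (fun r hr => hr.1)
    have hcontexp : Continuous fun r : ℝ => exp (r • B0) :=
      exp_continuous.comp (by continuity)
    have hcontg : ContinuousOn g (Set.Icc 0 t) := by
      exact isBoundedBilinearMap_apply.continuous.comp_continuousOn
        ((hcontexp.continuousOn.prodMk hcontZ) :
          ContinuousOn (fun r => (exp (r • B0), Z r)) (Set.Icc 0 t))
    have hderiv : ∀ s ∈ Set.Ico 0 t, HasDerivWithinAt g 0 (Set.Ici s) s := by
      intro s hs
      have h1 : HasDerivAt (fun r : ℝ => exp (r • B0)) (exp (s • B0) * B0) s :=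
        hasDerivAt_exp_smul_const B0 s
      have h2 : HasDerivWithinAt Z (Z' s) (Set.Ici s) s :=
        (hZ s hs.1).mono (Set.Ici_subset_Ici.mpr hs.1)
      have h3 := (h1.hasDerivWithinAt (s := Set.Ici s)).clm_apply h2
      have h4 : (exp (s • B0) * B0) (Z s) + exp (s • B0) (Z' s) = 0 := by
        rw [hZ' s hs.1, ContinuousLinearMap.mul_apply, map_neg]
        exact add_neg_cancel _
      rwa [h4] at h3
    have := constant_of_has_deriv_right_zero hcontg hderiv t (Set.right_mem_Icc.mpr ht)
    simpa [hg, exp_zero] using this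
  intro t ht
  have h0 := key t ht
  have hinv : exp (t • (-B0)) * exp (t • B0) = 1 := by
    rw [← exp_add_of_commute]
    · rw [show t • (-B0) + t • B0 = 0 by module, exp_zero]
    · rw [smul_neg]
      exact (Commute.refl (t • B0)).neg_left
  calc Z t = (exp (t • (-B0)) * exp (t • B0)) (Z t) := by
        rw [hinv]; simp
    _ = exp (t • (-B0)) (exp (t • B0) (Z t)) := by
        rw [ContinuousLinearMap.mul_apply]
    _ = exp (t • (-B0)) (Z 0) := by rw [h0]

end ODE

section Complexify

variable {ι : Type*} [Fintype ι] [DecidableEq ι]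

/-- Coordinatewise complexification as a continuous `ℝ`-linear map. -/
noncomputable def realToComplexPi (ι : Type*) [Fintype ι] : (ι → ℝ) →L[ℝ] (ι → ℂ) :=
  LinearMap.toContinuousLinearMap
  { toFun := fun w i => (w i : ℂ)
    map_add' := by intro a b; funext i; simp
    map_smul' := by
      intro c a; funext i
      simp [Complex.real_smul] }

@[simp] lemma realToComplexPi_apply (w : ι → ℝ) (i : ι) :
    realToComplexPi ι w i = (w i : ℂ) := rfl

lemma complexify_exp (C : (ι → ℝ) →L[ℝ] (ι → ℝ)) (Cc : (ι → ℂ) →L[ℂ] (ι → ℂ))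
    (hR : ∀ w, realToComplexPi ι (C w) = Cc (realToComplexPi ι w)) (w : ι → ℝ) :
    realToComplexPi ι (exp C w) = exp Cc (realToComplexPi ι w) := by
  set R := realToComplexPi ι
  have hpow : ∀ (k : ℕ) (v : ι → ℝ), R ((C ^ k) v) = (Cc ^ k) (R v) := by
    intro k
    induction k with
    | zero => intro v; simp
    | succ k ih =>
      intro v
      rw [pow_succ, pow_succ, ContinuousLinearMap.mul_apply, ContinuousLinearMap.mul_apply,
        ih, hR]
  rw [expAux_apply_eq_tsum (𝕂 := ℝ) C w, expAux_apply_eq_tsum (𝕂 := ℂ) Cc (R w),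
    R.map_tsum (expAux_summable_apply C w)]
  congr 1
  funext k
  rw [map_smul, hpow]
  ext i
  simp [Complex.real_smul]

end Complexify


/-- distributed dV/dQ index algorithm. Buses are `Fin (n+m)`; load buses are
embedded via `Fin.castAdd m : Fin n → Fin (n+m)` and generator buses via
`Fin.natAdd n : Fin m → Fin (n+m)`. The affine vector field `F` (the right-hand sides of
the ODE system, scaled by `τ`) is written as `F(x,y) = −M(x,y) + c`. Under the spectral
assumptions on `M` and existence of a steady state, the `x`-component of steady states is
unique and every solution of the ODE system satisfies `x_i(t) → x*_i`. -/
theorem stmt_0 (n m : ℕ) (hn : 1 ≤ n) (hm : 1 ≤ m)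
    (G B : Matrix (Fin (n + m)) (Fin (n + m)) ℝ)
    (θ V : Fin (n + m) → ℝ) (hV : ∀ i, 0 < V i)
    (d D : Fin (n + m) → Fin (n + m) → ℝ)
    (hd : ∀ i j, d i j =
      V i * V j * (G i j * Real.sin (θ i - θ j) - B i j * Real.cos (θ i - θ j)))
    (hD : ∀ i j, D i j =
      V i * V j * (G i j * Real.cos (θ i - θ j) + B i j * Real.sin (θ i - θ j)))
    (P Q : Fin (n + m) → ℝ)
    (hP : ∀ i, P i = ∑ j, D i j) (hQ : ∀ i, Q i = ∑ j, d i j)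
    (τ : ℝ) (hτ : 0 < τ)
    -- the affine vector field given by the right-hand sides of the ODE system:
    (F : (Fin n → ℝ) → (Fin (n + m) → ℝ) → (Fin n ⊕ Fin (n + m)) → ℝ)
    (hF1 : ∀ (x : Fin n → ℝ) (y : Fin (n + m) → ℝ) (i : Fin n),
      F x y (Sum.inl i) =
        Q (Fin.castAdd m i) * (1 - x i) - P (Fin.castAdd m i) * y (Fin.castAdd m i)
          - (∑ j : Fin n, d (Fin.castAdd m i) (Fin.castAdd m j) * x j)
          + (∑ j : Fin (n + m), D (Fin.castAdd m i) j * y j))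
    (hF2 : ∀ (x : Fin n → ℝ) (y : Fin (n + m) → ℝ) (i : Fin n),
      F x y (Sum.inr (Fin.castAdd m i)) =
        Q (Fin.castAdd m i) * y (Fin.castAdd m i) - P (Fin.castAdd m i) * x i
          - (∑ j : Fin n, D (Fin.castAdd m i) (Fin.castAdd m j) * x j)
          - (∑ j : Fin (n + m), d (Fin.castAdd m i) j * y j))
    (hF3 : ∀ (x : Fin n → ℝ) (y : Fin (n + m) → ℝ) (i : Fin m),
      F x y (Sum.inr (Fin.natAdd n i)) =
        Q (Fin.natAdd n i) * y (Fin.natAdd n i)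
          - (∑ j : Fin n, D (Fin.natAdd n i) (Fin.castAdd m j) * x j)
          - (∑ j : Fin (n + m), d (Fin.natAdd n i) j * y j))
    -- `M` and `c` realize the affine system: `F(x,y) = −M(x,y) + c`
    (M : Matrix (Fin n ⊕ Fin (n + m)) (Fin n ⊕ Fin (n + m)) ℝ)
    (c : (Fin n ⊕ Fin (n + m)) → ℝ)
    (hM : ∀ (x : Fin n → ℝ) (y : Fin (n + m) → ℝ) (k : Fin n ⊕ Fin (n + m)),
      F x y k = -(M.mulVec (Sum.elim x y) k) + c k)
    -- (i) every complex eigenvalue of `M` is `0` or has strictly positive real part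
    (heig : ∀ μ : ℂ, (M.charpoly.map (algebraMap ℝ ℂ)).IsRoot μ → μ = 0 ∨ 0 < μ.re)
    -- (ii) `0` is an eigenvalue of algebraic multiplicity one, with eigenspace
    -- spanned by `(0_n, 1_{n+m})`
    (hmult : (M.charpoly.map (algebraMap ℝ ℂ)).rootMultiplicity 0 = 1)
    (hker : LinearMap.ker M.mulVecLin =
      Submodule.span ℝ
        {(Sum.elim (fun _ => (0 : ℝ)) fun _ => (1 : ℝ) : Fin n ⊕ Fin (n + m) → ℝ)})
    -- (iii) a steady state exists
    (hex : ∃ (xs : Fin n → ℝ) (ys : Fin (n + m) → ℝ), M.mulVec (Sum.elim xs ys) = c) :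
    -- the `x`-component of steady states is unique
    (∀ (xs xs' : Fin n → ℝ) (ys ys' : Fin (n + m) → ℝ),
        M.mulVec (Sum.elim xs ys) = c → M.mulVec (Sum.elim xs' ys') = c → xs = xs') ∧
    -- and every solution of the ODE system converges in its `x`-components to it
    (∀ (xs : Fin n → ℝ) (ys : Fin (n + m) → ℝ), M.mulVec (Sum.elim xs ys) = c →
      ∀ (x x' : ℝ → Fin n → ℝ) (y y' : ℝ → Fin (n + m) → ℝ),
        (∀ (i : Fin n) (t : ℝ), 0 ≤ t →
          HasDerivWithinAt (fun s => x s i) (x' t i) (Set.Ici 0) t) →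
        (∀ (i : Fin (n + m)) (t : ℝ), 0 ≤ t →
          HasDerivWithinAt (fun s => y s i) (y' t i) (Set.Ici 0) t) →
        (∀ (i : Fin n) (t : ℝ), 0 ≤ t → τ * x' t i = F (x t) (y t) (Sum.inl i)) →
        (∀ (i : Fin (n + m)) (t : ℝ), 0 ≤ t → τ * y' t i = F (x t) (y t) (Sum.inr i)) →
        ∀ i : Fin n, Tendsto (fun t => x t i) atTop (𝓝 (xs i))) := by
  classical
  set v0 : (Fin n ⊕ Fin (n + m)) → ℝ := Sum.elim (fun _ => (0 : ℝ)) (fun _ => (1 : ℝ)) with hv0def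
  have hv0ker : M.mulVecLin v0 = 0 := by
    have : v0 ∈ LinearMap.ker M.mulVecLin := by
      rw [hker]
      exact Submodule.mem_span_singleton_self _
    exact this
  constructor
  · -- uniqueness of the x-component
    intro xs xs' ys ys' h h'
    have hdiff : M.mulVecLin (Sum.elim xs ys - Sum.elim xs' ys') = 0 := by
      rw [map_sub]
      show M.mulVec (Sum.elim xs ys) - M.mulVec (Sum.elim xs' ys') = 0
      rw [h, h', sub_self]
    have hmem : Sum.elim xs ys - Sum.elim xs' ys' ∈ LinearMap.ker M.mulVecLin := hdiff
    rw [hker, Submodule.mem_span_singleton] at hmem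
    obtain ⟨a, ha⟩ := hmem
    funext i
    have h0 := congrFun ha (Sum.inl i)
    simp [hv0def] at h0
    linarith [h0]
  · -- convergence
    intro xs ys hsteady x x' y y' hx hy hode1 hode2 i
    -- the real continuous linear map given by M
    set A : ((Fin n ⊕ Fin (n + m)) → ℝ) →L[ℝ] ((Fin n ⊕ Fin (n + m)) → ℝ) := LinearMap.toContinuousLinearMap M.mulVecLin with hA
    set B0 : ((Fin n ⊕ Fin (n + m)) → ℝ) →L[ℝ] ((Fin n ⊕ Fin (n + m)) → ℝ) := τ⁻¹ • A with hB0
    set Z : ℝ → ((Fin n ⊕ Fin (n + m)) → ℝ) := fun t => Sum.elim (x t) (y t) - Sum.elim xs ys with hZdef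
    set Z' : ℝ → ((Fin n ⊕ Fin (n + m)) → ℝ) := fun t => Sum.elim (x' t) (y' t) with hZ'def
    have hZderiv : ∀ t, 0 ≤ t → HasDerivWithinAt Z (Z' t) (Set.Ici 0) t := by
      intro t ht
      rw [hasDerivWithinAt_pi]
      intro k
      cases k with
      | inl j => exact (hx j t ht).sub_const (xs j)
      | inr j => exact (hy j t ht).sub_const (ys j)
    have hAZ : ∀ t, A (Z t) =
        M.mulVec (Sum.elim (x t) (y t)) - M.mulVec (Sum.elim xs ys) := by
      intro t
      show M.mulVecLin (Sum.elim (x t) (y t) - Sum.elim xs ys) = _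
      rw [map_sub]
      rfl
    have hZode : ∀ t, 0 ≤ t → Z' t = -(B0 (Z t)) := by
      intro t ht
      have hτZ : ∀ k : (Fin n ⊕ Fin (n + m)), τ * Z' t k = -(M.mulVec (Sum.elim (x t) (y t)) k) + c k := by
        intro k
        cases k with
        | inl j =>
          rw [show Z' t (Sum.inl j) = x' t j from rfl, hode1 j t ht, hM]
        | inr j =>
          rw [show Z' t (Sum.inr j) = y' t j from rfl, hode2 j t ht, hM]
      funext k
      have h3 := hτZ k
      have h2 : c k = M.mulVec (Sum.elim xs ys) k := by rw [hsteady]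
      have hRHS : (-(B0 (Z t))) k
          = -(τ⁻¹ * (M.mulVec (Sum.elim (x t) (y t)) k - M.mulVec (Sum.elim xs ys) k)) := by
        rw [hB0]
        show -((τ⁻¹ • (A (Z t))) k) = _
        rw [hAZ t]
        show -(τ⁻¹ * ((M.mulVec (Sum.elim (x t) (y t)) - M.mulVec (Sum.elim xs ys)) k)) = _
        rw [Pi.sub_apply]
      rw [hRHS]
      rw [h2] at h3
      have hτ0 : τ ≠ 0 := ne_of_gt hτ
      field_simp at h3 ⊢
      linarith
    have hrep := ode_representation B0 Z Z' hZderiv hZode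
    -- complexification
    set Mc : Matrix (Fin n ⊕ Fin (n + m)) (Fin n ⊕ Fin (n + m)) ℂ := M.map (algebraMap ℝ ℂ) with hMc
    set Ac : ((Fin n ⊕ Fin (n + m)) → ℂ) →L[ℂ] ((Fin n ⊕ Fin (n + m)) → ℂ) := LinearMap.toContinuousLinearMap Mc.mulVecLin with hAc
    set R : ((Fin n ⊕ Fin (n + m)) → ℝ) →L[ℝ] ((Fin n ⊕ Fin (n + m)) → ℂ) := realToComplexPi (Fin n ⊕ Fin (n + m)) with hR
    have hRA : ∀ w, R (A w) = Ac (R w) := by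
      intro w
      funext j
      show ((M.mulVec w j : ℝ) : ℂ) = Mc.mulVec (fun i => ((w i : ℝ) : ℂ)) j
      simp only [Matrix.mulVec, dotProduct, hMc, Matrix.map_apply,
        Complex.coe_algebraMap]
      push_cast
      rfl
    have hint : ∀ (s : ℝ) (w : (Fin n ⊕ Fin (n + m)) → ℝ),
        R (exp ((-s) • A) w) = exp ((-(s : ℂ)) • Ac) (R w) := by
      intro s w
      apply complexify_exp
      intro v
      show R ((-s) • A v) = (-(s : ℂ)) • Ac (R v)
      rw [map_smul, hRA]
      funext j
      show (-s) • (Ac (R v) j) = (-(s : ℂ)) * (Ac (R v) j)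
      rw [Complex.real_smul]
      push_cast
      ring
    -- charpoly of the complexified endomorphism
    have htoLin : Matrix.toLin' Mc = Mc.mulVecLin :=
      LinearMap.ext fun v => by rw [Matrix.toLin'_apply, Matrix.mulVecLin_apply]
    have hcharpoly : LinearMap.charpoly (Ac : ((Fin n ⊕ Fin (n + m)) → ℂ) →ₗ[ℂ] ((Fin n ⊕ Fin (n + m)) → ℂ))
        = M.charpoly.map (algebraMap ℝ ℂ) := by
      rw [hAc, LinearMap.coe_toContinuousLinearMap]
      rw [← LinearMap.charpoly_toMatrix (f := Mc.mulVecLin) (Pi.basisFun ℂ (Fin n ⊕ Fin (n + m))),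
        LinearMap.toMatrix_eq_toMatrix', ← htoLin, LinearMap.toMatrix'_toLin',
        Matrix.charpoly_map]
    set v0c : (Fin n ⊕ Fin (n + m)) → ℂ := R v0 with hv0c
    have hAcv0 : Ac v0c = 0 := by
      rw [hv0c, ← hRA]
      have : A v0 = 0 := by
        show M.mulVecLin v0 = 0
        exact hv0ker
      rw [this, map_zero]
    have hv0cne : v0c ≠ 0 := by
      intro hcontra
      have := congrFun hcontra (Sum.inr ⟨0, by omega⟩)
      simp [hv0c, hv0def, hR, realToComplexPi_apply] at this
    -- the generalized 0-eigenspace is the span of v0c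
    have hker0 : Module.End.maxGenEigenspace ((Ac : ((Fin n ⊕ Fin (n + m)) → ℂ) →ₗ[ℂ] ((Fin n ⊕ Fin (n + m)) → ℂ))) 0
        ≤ Submodule.span ℂ {v0c} := by
      have hspanle : Submodule.span ℂ {v0c}
          ≤ Module.End.maxGenEigenspace ((Ac : ((Fin n ⊕ Fin (n + m)) → ℂ) →ₗ[ℂ] ((Fin n ⊕ Fin (n + m)) → ℂ))) 0 := by
        rw [Submodule.span_le, Set.singleton_subset_iff]
        rw [SetLike.mem_coe, Module.End.mem_maxGenEigenspace]
        refine ⟨1, ?_⟩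
        simp only [zero_smul, sub_zero, pow_one]
        exact hAcv0
      have hfin1 : Module.finrank ℂ
          (Module.End.maxGenEigenspace ((Ac : ((Fin n ⊕ Fin (n + m)) → ℂ) →ₗ[ℂ] ((Fin n ⊕ Fin (n + m)) → ℂ))) 0) = 1 := by
        rw [LinearMap.finrank_maxGenEigenspace_zero_eq]
        rw [hcharpoly, ← Polynomial.rootMultiplicity_eq_natTrailingDegree', hmult]
      have heq := Submodule.eq_of_le_of_finrank_le hspanle
        (by rw [hfin1, finrank_span_singleton hv0cne])
      rw [← heq]
    have hroots : ∀ μ : ℂ,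
        (LinearMap.charpoly ((Ac : ((Fin n ⊕ Fin (n + m)) → ℂ) →ₗ[ℂ] ((Fin n ⊕ Fin (n + m)) → ℂ)))).IsRoot μ → μ = 0 ∨ 0 < μ.re := by
      intro μ hμ
      rw [hcharpoly] at hμ
      exact heig μ hμ
    obtain ⟨γ, htend⟩ := core_tendsto Ac v0c hroots hker0 hAcv0 (R (Z 0))
    -- compose with t ↦ t * τ⁻¹ and take the (inl i)-coordinate real part
    have hcomp : Tendsto (fun t : ℝ => t * τ⁻¹) atTop atTop :=
      Tendsto.atTop_mul_const (inv_pos.mpr hτ) tendsto_id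
    have htend2 := htend.comp hcomp
    have hcoord : Tendsto
        (fun t : ℝ => ((exp ((-((t * τ⁻¹ : ℝ) : ℂ)) • Ac) (R (Z 0))) (Sum.inl i)).re)
        atTop (𝓝 (((γ • v0c) (Sum.inl i)).re)) := by
      exact (Complex.continuous_re.tendsto _).comp
        (((continuous_apply (Sum.inl i)).tendsto _).comp htend2)
    have hlim0 : ((γ • v0c) (Sum.inl i)).re = 0 := by
      simp [hv0c, hv0def, hR, realToComplexPi_apply]
    rw [hlim0] at hcoord
    -- identify with the real solution for t ≥ 0
    have heventually : ∀ᶠ t in atTop,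
        ((exp ((-((t * τ⁻¹ : ℝ) : ℂ)) • Ac) (R (Z 0))) (Sum.inl i)).re = x t i - xs i := by
      filter_upwards [eventually_ge_atTop (0 : ℝ)] with t ht
      have h1 := hrep t ht
      have h2 : t • (-B0) = (-(t * τ⁻¹)) • A := by
        rw [hB0]; module
      rw [h2] at h1
      have h3 := hint (t * τ⁻¹) (Z 0)
      rw [← h3, ← h1]
      show ((Z t (Sum.inl i) : ℝ) : ℂ).re = x t i - xs i
      rw [Complex.ofReal_re]
      rfl
    have hfinal : Tendsto (fun t => x t i - xs i) atTop (𝓝 0) :=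
      hcoord.congr' heventually
    have := hfinal.add_const (xs i)
    simpa using this
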